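/- Let μ be a Borel measure on ℝ and let φ : ℝ → ℝ be such that φ ∈ L¹(μ) and x ↦ x·φ(x) ∈ L¹(μ), with ∫ φ dμ = 0 and ∫ x·φ(x) dμ(x) = 0. Suppose there exist x₀ < x₁ such that φ(x) ≤ 0 for x ∈ (x₀, x₁) and φ(x) ≥ 0 for x ∉ [x₀, x₁]. Then for every convex function f : ℝ → ℝ with f·φ ∈ L¹(μ), ∫ f·φ dμ ≥ 0. Moreover, if there exists a strictly convex f with f·φ ∈ L¹(μ) and ∫ f·φ dμ = 0, then φ = 0 μ-almost everywhere. -/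

import Mathlib

open MeasureTheory Set

section aux

variable {f : ℝ → ℝ} {x₀ x₁ : ℝ}

/-- Convex function lies below secant line inside the interval. -/
lemma convex_le_secant (hf : ConvexOn ℝ Set.univ f) (hx : x₀ < x₁) {x : ℝ}
    (h0 : x₀ < x) (h1 : x < x₁) :
    f x ≤ f x₀ + (f x₁ - f x₀) / (x₁ - x₀) * (x - x₀) := by
  have hs := hf.slope_mono_adjacent (mem_univ x₀) (mem_univ x₁) h0 h1
  rw [div_le_div_iff₀ (by linarith) (by linarith)] at hs
  have hden : (0:ℝ) < x₁ - x₀ := by linarith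
  rw [← sub_nonneg]
  have key : (f x₀ + (f x₁ - f x₀) / (x₁ - x₀) * (x - x₀) - f x) * (x₁ - x₀)
      = (f x₁ - f x) * (x - x₀) - (f x - f x₀) * (x₁ - x) := by
    field_simp
    ring
  nlinarith [key, hden]

/-- Strictly convex function lies strictly below secant line inside the interval. -/
lemma strictConvex_lt_secant (hf : StrictConvexOn ℝ Set.univ f) (hx : x₀ < x₁) {x : ℝ}
    (h0 : x₀ < x) (h1 : x < x₁) :
    f x < f x₀ + (f x₁ - f x₀) / (x₁ - x₀) * (x - x₀) := by
  have hs := hf.slope_strict_mono_adjacent (mem_univ x₀) (mem_univ x₁) h0 h1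
  rw [div_lt_div_iff₀ (by linarith) (by linarith)] at hs
  have hden : (0:ℝ) < x₁ - x₀ := by linarith
  rw [← sub_pos]
  have key : (f x₀ + (f x₁ - f x₀) / (x₁ - x₀) * (x - x₀) - f x) * (x₁ - x₀)
      = (f x₁ - f x) * (x - x₀) - (f x - f x₀) * (x₁ - x) := by
    field_simp
    ring
  nlinarith [key, hden]

/-- Convex function lies above secant line outside the interval. -/
lemma convex_ge_secant (hf : ConvexOn ℝ Set.univ f) (hx : x₀ < x₁) {x : ℝ}
    (h : x ∉ Set.Icc x₀ x₁) :
    f x₀ + (f x₁ - f x₀) / (x₁ - x₀) * (x - x₀) ≤ f x := by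
  have hden : (0:ℝ) < x₁ - x₀ := by linarith
  rw [Set.mem_Icc, not_and_or, not_le, not_le] at h
  rcases h with h' | h'
  · have hlt : x < x₀ := h'
    have hs := hf.slope_mono_adjacent (mem_univ x) (mem_univ x₁) hlt hx
    rw [div_le_div_iff₀ (by linarith) (by linarith)] at hs
    rw [← sub_nonneg]
    have key : (f x - (f x₀ + (f x₁ - f x₀) / (x₁ - x₀) * (x - x₀))) * ((x₀ - x) * (x₁ - x₀))
        = ((f x₁ - f x₀) * (x₀ - x) - (f x₀ - f x) * (x₁ - x₀)) * (x₀ - x) := by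
      field_simp
      ring
    nlinarith [key, hden, mul_pos (show (0:ℝ) < x₀ - x by linarith) hden]
  · have hlt : x₁ < x := h'
    have hs := hf.slope_mono_adjacent (mem_univ x₀) (mem_univ x) hx hlt
    rw [div_le_div_iff₀ (by linarith) (by linarith)] at hs
    rw [← sub_nonneg]
    have key : (f x - (f x₀ + (f x₁ - f x₀) / (x₁ - x₀) * (x - x₀))) * (x₁ - x₀)
        = (f x - f x₁) * (x₁ - x₀) - (f x₁ - f x₀) * (x - x₁) := by
      field_simp
      ring
    nlinarith [key, hden]

/-- Strictly convex function lies strictly above secant line outside the interval. -/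
lemma strictConvex_gt_secant (hf : StrictConvexOn ℝ Set.univ f) (hx : x₀ < x₁) {x : ℝ}
    (h : x ∉ Set.Icc x₀ x₁) :
    f x₀ + (f x₁ - f x₀) / (x₁ - x₀) * (x - x₀) < f x := by
  have hden : (0:ℝ) < x₁ - x₀ := by linarith
  rw [Set.mem_Icc, not_and_or, not_le, not_le] at h
  rcases h with h' | h'
  · have hlt : x < x₀ := h'
    have hs := hf.slope_strict_mono_adjacent (mem_univ x) (mem_univ x₁) hlt hx
    rw [div_lt_div_iff₀ (by linarith) (by linarith)] at hs
    rw [← sub_pos]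
    have key : (f x - (f x₀ + (f x₁ - f x₀) / (x₁ - x₀) * (x - x₀))) * ((x₀ - x) * (x₁ - x₀))
        = ((f x₁ - f x₀) * (x₀ - x) - (f x₀ - f x) * (x₁ - x₀)) * (x₀ - x) := by
      field_simp
      ring
    nlinarith [key, hden, mul_pos (show (0:ℝ) < x₀ - x by linarith) hden]
  · have hlt : x₁ < x := h'
    have hs := hf.slope_strict_mono_adjacent (mem_univ x₀) (mem_univ x) hx hlt
    rw [div_lt_div_iff₀ (by linarith) (by linarith)] at hs
    rw [← sub_pos]
    have key : (f x - (f x₀ + (f x₁ - f x₀) / (x₁ - x₀) * (x - x₀))) * (x₁ - x₀)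
        = (f x - f x₁) * (x₁ - x₀) - (f x₁ - f x₀) * (x - x₁) := by
      field_simp
      ring
    nlinarith [key, hden]

end aux

/-- **Lemma 2.5 (two crossings).** Let `μ` be a Borel measure on `ℝ` and `φ ∈ L¹(μ)`
with `x φ(x) ∈ L¹(μ)`, `∫ φ dμ = 0 = ∫ x φ(x) dμ`, and suppose `φ ≤ 0` on `(x₀, x₁)`
and `φ ≥ 0` outside `[x₀, x₁]`.  Then `∫ f φ dμ ≥ 0` for every convex `f` with
`f φ ∈ L¹(μ)`; moreover if `∫ f φ dμ = 0` for some strictly convex such `f`, then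
`φ = 0` μ-a.e. -/
theorem two_crossings_convex_nonneg
    (μ : Measure ℝ) (φ : ℝ → ℝ)
    (hφ : Integrable φ μ) (hxφ : Integrable (fun x => x * φ x) μ)
    (h0 : (∫ x, φ x ∂μ) = 0) (h1 : (∫ x, x * φ x ∂μ) = 0)
    (x₀ x₁ : ℝ) (hx : x₀ < x₁)
    (hneg : ∀ x ∈ Set.Ioo x₀ x₁, φ x ≤ 0)
    (hpos : ∀ x ∉ Set.Icc x₀ x₁, 0 ≤ φ x) :
    (∀ f : ℝ → ℝ, ConvexOn ℝ Set.univ f → Integrable (fun x => f x * φ x) μ →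
      0 ≤ ∫ x, f x * φ x ∂μ) ∧
    (∀ f : ℝ → ℝ, StrictConvexOn ℝ Set.univ f → Integrable (fun x => f x * φ x) μ →
      (∫ x, f x * φ x ∂μ) = 0 → ∀ᵐ x ∂μ, φ x = 0) := by
  -- general set-up for a function f: the secant line L and the difference g
  -- key integral computation: for any f with f*φ integrable,
  -- ∫ (f - L) φ = ∫ f φ.
  have main : ∀ f : ℝ → ℝ, Integrable (fun x => f x * φ x) μ →
      Integrable (fun x => (f x - (f x₀ + (f x₁ - f x₀) / (x₁ - x₀) * (x - x₀))) * φ x) μ ∧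
      (∫ x, (f x - (f x₀ + (f x₁ - f x₀) / (x₁ - x₀) * (x - x₀))) * φ x ∂μ)
        = ∫ x, f x * φ x ∂μ := by
    intro f hint
    set s : ℝ := (f x₁ - f x₀) / (x₁ - x₀) with hs
    have hL : Integrable (fun x => (f x₀ + s * (x - x₀)) * φ x) μ := by
      have h' : Integrable (fun x => s * (x * φ x) + (f x₀ - s * x₀) * φ x) μ :=
        (hxφ.const_mul s).add (hφ.const_mul (f x₀ - s * x₀))
      refine h'.congr (Filter.Eventually.of_forall fun x => ?_)
      ring
    have hLI : (∫ x, (f x₀ + s * (x - x₀)) * φ x ∂μ) = 0 := by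
      have : (∫ x, (f x₀ + s * (x - x₀)) * φ x ∂μ)
          = ∫ x, s * (x * φ x) + (f x₀ - s * x₀) * φ x ∂μ := by
        congr 1; funext x; ring
      rw [this, integral_add (hxφ.const_mul s) (hφ.const_mul (f x₀ - s * x₀)),
        integral_const_mul, integral_const_mul, h0, h1]
      ring
    constructor
    · have h' : Integrable (fun x => f x * φ x - (f x₀ + s * (x - x₀)) * φ x) μ := hint.sub hL
      refine h'.congr (Filter.Eventually.of_forall fun x => ?_)
      ring
    · have : (∫ x, (f x - (f x₀ + s * (x - x₀))) * φ x ∂μ)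
          = ∫ x, f x * φ x - (f x₀ + s * (x - x₀)) * φ x ∂μ := by
        congr 1; funext x; ring
      rw [this, integral_sub hint hL, hLI, sub_zero]
  -- pointwise nonnegativity of g * φ for convex f
  have ptnn : ∀ f : ℝ → ℝ, ConvexOn ℝ Set.univ f → ∀ x : ℝ,
      0 ≤ (f x - (f x₀ + (f x₁ - f x₀) / (x₁ - x₀) * (x - x₀))) * φ x := by
    intro f hf x
    by_cases hicc : x ∈ Set.Icc x₀ x₁
    · rcases eq_or_lt_of_le hicc.1 with h0' | h0'
      · simp [← h0']
      rcases eq_or_lt_of_le hicc.2 with h1' | h1'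
      · have hne' : x₁ - x₀ ≠ 0 := sub_ne_zero.2 (ne_of_gt hx)
        have hc : (f x₁ - f x₀) / (x₁ - x₀) * (x - x₀) = f x₁ - f x₀ := by
          rw [h1']; exact div_mul_cancel₀ _ hne'
        have hz : f x - (f x₀ + (f x₁ - f x₀) / (x₁ - x₀) * (x - x₀)) = 0 := by
          rw [hc, h1']; ring
        rw [hz, zero_mul]
      · have hgle : f x - (f x₀ + (f x₁ - f x₀) / (x₁ - x₀) * (x - x₀)) ≤ 0 := by
          have := convex_le_secant hf hx h0' h1'; linarith
        exact mul_nonneg_iff.2 (Or.inr ⟨hgle, hneg x ⟨h0', h1'⟩⟩)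
    · exact mul_nonneg
        (by have := convex_ge_secant hf hx hicc; linarith) (hpos x hicc)
  constructor
  · intro f hf hint
    obtain ⟨hgint, hgI⟩ := main f hint
    rw [← hgI]
    exact integral_nonneg (ptnn f hf)
  · intro f hf hint hzero
    obtain ⟨hgint, hgI⟩ := main f hint
    rw [← hgI] at hzero
    have hae : (fun x => (f x - (f x₀ + (f x₁ - f x₀) / (x₁ - x₀) * (x - x₀))) * φ x)
        =ᵐ[μ] 0 :=
      (integral_eq_zero_iff_of_nonneg (ptnn f hf.convexOn) hgint).1 hzero
    -- a.e., φ x = 0 or x ∈ {x₀, x₁}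
    have hae2 : ∀ᵐ x ∂μ, φ x = 0 ∨ x = x₀ ∨ x = x₁ := by
      filter_upwards [hae] with x hx0
      by_cases hx₀ : x = x₀
      · exact Or.inr (Or.inl hx₀)
      by_cases hx₁ : x = x₁
      · exact Or.inr (Or.inr hx₁)
      left
      have hg : f x - (f x₀ + (f x₁ - f x₀) / (x₁ - x₀) * (x - x₀)) ≠ 0 := by
        by_cases hicc : x ∈ Set.Icc x₀ x₁
        · have h0' : x₀ < x := lt_of_le_of_ne hicc.1 (Ne.symm hx₀)
          have h1' : x < x₁ := lt_of_le_of_ne hicc.2 hx₁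
          have := strictConvex_lt_secant hf hx h0' h1'
          intro h; rw [sub_eq_zero] at h; linarith
        · have := strictConvex_gt_secant hf hx hicc
          intro h; rw [sub_eq_zero] at h; linarith
      have h2 : f x - (f x₀ + (f x₁ - f x₀) / (x₁ - x₀) * (x - x₀)) = 0 ∨ φ x = 0 := by
        simpa using hx0
      tauto
    -- φ agrees a.e. with its restriction to {x₀, x₁}
    have hind : φ =ᵐ[μ] ({x₀, x₁} : Set ℝ).indicator φ := by
      filter_upwards [hae2] with x hx'
      rcases hx' with h | h | h
      · by_cases hm : x ∈ ({x₀, x₁} : Set ℝ) <;>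
          simp [Set.indicator_apply, hm, h]
      · simp [Set.indicator_apply, h]
      · simp [Set.indicator_apply, h]
    have hxind : (fun x => x * φ x) =ᵐ[μ] ({x₀, x₁} : Set ℝ).indicator (fun x => x * φ x) := by
      filter_upwards [hae2] with x hx'
      rcases hx' with h | h | h
      · by_cases hm : x ∈ ({x₀, x₁} : Set ℝ) <;>
          simp [Set.indicator_apply, hm, h]
      · simp [Set.indicator_apply, h]
      · simp [Set.indicator_apply, h]
    have hmeas : MeasurableSet ({x₀, x₁} : Set ℝ) := by measurability
    have hne : x₀ ≠ x₁ := ne_of_lt hx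
    have hcoe : (↑({x₀, x₁} : Finset ℝ) : Set ℝ) = ({x₀, x₁} : Set ℝ) := by simp
    -- compute the two integrals as weighted sums
    have e0 : (μ {x₀}).toReal * φ x₀ + (μ {x₁}).toReal * φ x₁ = 0 := by
      have := h0
      rw [integral_congr_ae hind, integral_indicator hmeas, ← hcoe] at this
      rw [integral_finset (hf := hφ.integrableOn)] at this
      rwa [Finset.sum_pair hne] at this
    have e1 : (μ {x₀}).toReal * (x₀ * φ x₀) + (μ {x₁}).toReal * (x₁ * φ x₁) = 0 := by
      have := h1
      rw [integral_congr_ae hxind, integral_indicator hmeas, ← hcoe] at this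
      rw [integral_finset (hf := hxφ.integrableOn)] at this
      rwa [Finset.sum_pair hne] at this
    have hb : (μ {x₁}).toReal * φ x₁ = 0 := by
      have h' : (μ {x₁}).toReal * φ x₁ * (x₁ - x₀) = 0 := by linear_combination e1 - x₀ * e0
      rcases mul_eq_zero.1 h' with h' | h'
      · exact h'
      · exact absurd h' (by intro h''; linarith)
    have ha : (μ {x₀}).toReal * φ x₀ = 0 := by linarith
    -- if φ is nonzero at an atom, the atom has finite measure (by integrability)
    have hfin : ∀ a : ℝ, φ a ≠ 0 → μ {a} ≠ ⊤ := by
      intro a hφa htop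
      have hlt := hφ.hasFiniteIntegral
      have hge : ∫⁻ x in {a}, ‖φ x‖₊ ∂μ ≤ ∫⁻ x, ‖φ x‖₊ ∂μ :=
        setLIntegral_le_lintegral _ _
      rw [lintegral_singleton] at hge
      have hpos' : (0:ENNReal) < ‖φ a‖₊ := by
        simpa using hφa
      have : (‖φ a‖₊ : ENNReal) * μ {a} = ⊤ := by
        rw [htop, ENNReal.mul_top (by exact ne_of_gt hpos')]
      rw [this] at hge
      simp only [top_le_iff] at hge
      exact absurd hge (by simpa [HasFiniteIntegral, enorm_eq_nnnorm] using hlt.ne)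
    have hz : ∀ a : ℝ, (μ {a}).toReal * φ a = 0 → (a = x₀ ∨ a = x₁) → ∀ᵐ x ∂μ, x = a → φ x = 0 := by
      intro a hza _ 
      rcases mul_eq_zero.1 hza with h' | h'
      · by_cases hφa : φ a = 0
        · exact Filter.Eventually.of_forall fun x hxa => hxa ▸ hφa
        · have hμ : μ {a} = 0 := by
            rcases ENNReal.toReal_eq_zero_iff _ |>.1 h' with h'' | h''
            · exact h''
            · exact absurd h'' (hfin a hφa)
          have : ∀ᵐ x ∂μ, x ≠ a := by
            rw [ae_iff]
            simpa using hμ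
          filter_upwards [this] with x hxa h
          exact absurd h hxa
      · exact Filter.Eventually.of_forall fun x hxa => hxa ▸ h'
    filter_upwards [hae2, hz x₀ ha (Or.inl rfl), hz x₁ hb (Or.inr rfl)] with x h hz0 hz1
    rcases h with h | h | h
    · exact h
    · exact hz0 h
    · exact hz1 h
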